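/- For any fixed x ∈ ℝ and b > 0, lim_{N→∞} (1/N)·log( -x·Φ(-√N·x/b) + (b/√(2πN))·e^{-N x²/(2b²)} ) = -(max(x,0))²/(2b²). -/

import Mathlib

open MeasureTheory ProbabilityTheory Real Set Filter

/-- The cumulative distribution function of a standard Gaussian random variable. -/
noncomputable def stdGaussianCDF (x : ℝ) : ℝ :=
  ((gaussianReal 0 1) (Set.Iic x)).toReal

noncomputable def stdPdf (t : ℝ) : ℝ := (Real.sqrt (2 * π))⁻¹ * Real.exp (-t ^ 2 / 2)

lemma sqrt_tendsto_atTop : Tendsto Real.sqrt atTop atTop := by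
  refine tendsto_atTop_atTop.mpr fun c => ⟨c ^ 2, fun a ha => ?_⟩
  calc c ≤ |c| := le_abs_self c
    _ = Real.sqrt (c ^ 2) := (Real.sqrt_sq_eq_abs c).symm
    _ ≤ Real.sqrt a := Real.sqrt_le_sqrt ha

lemma stdPdf_pos (t : ℝ) : 0 < stdPdf t := by
  unfold stdPdf
  positivity

lemma pdf_eq (t : ℝ) : gaussianPDFReal 0 1 t = stdPdf t := by
  simp [gaussianPDFReal, stdPdf]

lemma stdPdf_neg (t : ℝ) : stdPdf (-t) = stdPdf t := by simp [stdPdf]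

lemma integrable_stdPdf : Integrable stdPdf := by
  have := integrable_gaussianPDFReal 0 1
  simpa [funext pdf_eq] using this

lemma cdf_int (y : ℝ) : stdGaussianCDF y = ∫ t in Iic y, stdPdf t := by
  unfold stdGaussianCDF
  rw [gaussianReal_apply_eq_integral 0 one_ne_zero,
    ENNReal.toReal_ofReal (integral_nonneg fun t => gaussianPDFReal_nonneg 0 1 t)]
  simp_rw [pdf_eq]

lemma cdf_tail (u : ℝ) : stdGaussianCDF (-u) = ∫ t in Ioi u, stdPdf t := by
  rw [cdf_int]
  have : (∫ t in Iic (-u), stdPdf t) = ∫ t in Iic (-u), stdPdf (-t) := by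
    simp_rw [stdPdf_neg]
  rw [this, integral_comp_neg_Iic, neg_neg]

lemma integrable_mul_stdPdf : Integrable (fun t => t * stdPdf t) := by
  have h := (integrable_mul_exp_neg_mul_sq (b := (1:ℝ)/2) (by norm_num)).const_mul
      ((Real.sqrt (2 * π))⁻¹)
  refine h.congr (Eq.eventuallyEq (funext fun t => ?_))
  unfold stdPdf
  ring_nf

lemma integral_mul_stdPdf (u : ℝ) : ∫ t in Ioi u, t * stdPdf t = stdPdf u := by
  have hderiv : ∀ t ∈ Ici u, HasDerivAt (fun s => -stdPdf s) (t * stdPdf t) t := by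
    intro t _
    unfold stdPdf
    have h : HasDerivAt (fun s : ℝ => -s ^ 2 / 2) (-t) t := by
      have := ((hasDerivAt_pow 2 t).neg.div_const 2)
      simpa using this.congr_deriv (by ring)
    have := ((h.exp).const_mul ((Real.sqrt (2 * π))⁻¹)).neg
    refine this.congr_deriv ?_
    ring
  have htend : Tendsto (fun s => -stdPdf s) atTop (nhds 0) := by
    rw [← neg_zero]
    refine Tendsto.neg ?_
    unfold stdPdf
    rw [show (0:ℝ) = (Real.sqrt (2 * π))⁻¹ * 0 by ring]
    refine Tendsto.const_mul _ ?_
    refine Real.tendsto_exp_atBot.comp ?_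
    have : Tendsto (fun s : ℝ => s ^ 2 / 2) atTop atTop :=
      (tendsto_pow_atTop two_ne_zero).atTop_div_const (by norm_num)
    have h2 : Tendsto (fun s : ℝ => -(s ^ 2 / 2)) atTop atBot := tendsto_neg_atBot_iff.mpr this
    refine h2.congr fun s => by ring
  have := integral_Ioi_of_hasDerivAt_of_tendsto' (f := fun s => -stdPdf s)
      (f' := fun t => t * stdPdf t) hderiv integrable_mul_stdPdf.integrableOn htend
  simpa using this

lemma G_repr (u : ℝ) :
    stdPdf u - u * stdGaussianCDF (-u) = ∫ t in Ioi u, (t - u) * stdPdf t := by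
  have h1 : (∫ t in Ioi u, (t - u) * stdPdf t)
      = (∫ t in Ioi u, t * stdPdf t) - ∫ t in Ioi u, u * stdPdf t := by
    rw [← integral_sub integrable_mul_stdPdf.integrableOn
      ((integrable_stdPdf.const_mul u).integrableOn)]
    congr 1; funext t; ring
  rw [h1, integral_mul_stdPdf, cdf_tail, integral_const_mul]

lemma G_le (u : ℝ) (hu : 0 ≤ u) :
    (∫ t in Ioi u, (t - u) * stdPdf t) ≤ stdPdf u := by
  rw [← integral_mul_stdPdf u]
  refine setIntegral_mono_on ?_ integrable_mul_stdPdf.integrableOn measurableSet_Ioi ?_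
  · exact (integrable_mul_stdPdf.sub (integrable_stdPdf.const_mul u)).integrableOn.congr
      (Filter.Eventually.of_forall fun t => by simp; ring)
  · intro t ht
    have := (stdPdf_pos t).le
    nlinarith

lemma le_G (u : ℝ) (hu : 0 ≤ u) :
    stdPdf (u + 2) ≤ ∫ t in Ioi u, (t - u) * stdPdf t := by
  have hsub : Ioc (u + 1) (u + 2) ⊆ Ioi u := fun t ht => lt_trans (by linarith) ht.1
  have hint : IntegrableOn (fun t => (t - u) * stdPdf t) (Ioi u) :=
    (integrable_mul_stdPdf.sub (integrable_stdPdf.const_mul u)).integrableOn.congr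
      (Filter.Eventually.of_forall fun t => by simp; ring)
  have h1 : (∫ t in Ioc (u + 1) (u + 2), (t - u) * stdPdf t)
      ≤ ∫ t in Ioi u, (t - u) * stdPdf t := by
    refine setIntegral_mono_set hint ?_ (Filter.Eventually.of_forall hsub)
    refine (ae_restrict_iff' measurableSet_Ioi).mpr (Filter.Eventually.of_forall ?_)
    intro t ht
    have h1 : (0:ℝ) ≤ t - u := by simp at ht; linarith
    exact mul_nonneg h1 (stdPdf_pos t).le
  refine le_trans ?_ h1
  have h2 : (∫ _ in Ioc (u + 1) (u + 2), stdPdf (u + 2))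
      ≤ ∫ t in Ioc (u + 1) (u + 2), (t - u) * stdPdf t := by
    refine setIntegral_mono_on (integrableOn_const measure_Ioc_lt_top.ne)
      (hint.mono_set hsub) measurableSet_Ioc ?_
    intro t ht
    obtain ⟨ht1, ht2⟩ := ht
    have hp : stdPdf (u + 2) ≤ stdPdf t := by
      unfold stdPdf
      refine mul_le_mul_of_nonneg_left (Real.exp_le_exp.mpr ?_) (by positivity)
      nlinarith
    calc stdPdf (u + 2) = 1 * stdPdf (u + 2) := (one_mul _).symm
      _ ≤ (t - u) * stdPdf t := by
          refine mul_le_mul (by linarith) hp (stdPdf_pos _).le (by linarith)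
  refine le_trans ?_ h2
  rw [setIntegral_const]
  rw [Real.volume_real_Ioc, show u + 2 - (u + 1) = 1 by ring]
  simp

-- limit helpers
lemma hlogN : Tendsto (fun N : ℕ => Real.log N / N) atTop (nhds 0) := by
  have h := Real.isLittleO_log_id_atTop.tendsto_div_nhds_zero
  exact h.comp tendsto_natCast_atTop_atTop

lemma hsqrtN : Tendsto (fun N : ℕ => Real.sqrt N / N) atTop (nhds 0) := by
  have h1 : Tendsto (fun N : ℕ => Real.sqrt N) atTop atTop :=
    sqrt_tendsto_atTop.comp tendsto_natCast_atTop_atTop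
  have h2 : Tendsto (fun N : ℕ => (Real.sqrt N)⁻¹) atTop (nhds 0) :=
    tendsto_inv_atTop_zero.comp h1
  refine h2.congr' ?_
  filter_upwards [eventually_ge_atTop 1] with N hN
  have hN' : (0:ℝ) < N := by exact_mod_cast hN
  have hmm : Real.sqrt N * Real.sqrt N = (N:ℝ) := Real.mul_self_sqrt hN'.le
  field_simp
  rw [sq, hmm]

lemma cdf_tendsto_one : Tendsto stdGaussianCDF atTop (nhds 1) := by
  have h := tendsto_measure_Iic_atTop (gaussianReal 0 1)
  rw [measure_univ] at h
  have := (ENNReal.tendsto_toReal ENNReal.one_ne_top).comp h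
  exact this

lemma log_stdPdf (t : ℝ) :
    Real.log (stdPdf t) = -Real.log (Real.sqrt (2 * π)) - t ^ 2 / 2 := by
  unfold stdPdf
  rw [Real.log_mul (by positivity) (Real.exp_ne_zero _), Real.log_inv, Real.log_exp]
  ring

/-- For fixed `x ∈ ℝ` and `b > 0`,
    `lim_{N→∞} (1/N) log( -x Φ(-√N x/b) + (b/√(2πN)) exp(-N x²/(2b²)) )
      = -(max(x,0))²/(2b²)`. -/
theorem gaussian_tail_log_limit' (x b : ℝ) (hb : 0 < b) :
    Tendsto (fun N : ℕ => (1 / (N : ℝ)) * Real.log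
        (-x * stdGaussianCDF (-(Real.sqrt N * x / b))
          + (b / Real.sqrt (2 * π * N)) * Real.exp (-((N : ℝ) * x ^ 2) / (2 * b ^ 2))))
      atTop (nhds (-(max x 0) ^ 2 / (2 * b ^ 2))) := by
  rcases lt_trichotomy x 0 with hx | hx | hx
  · -- x < 0
      have h2π : (0:ℝ) < 2 * π := by positivity
      have hrhs : -(max x 0) ^ 2 / (2 * b ^ 2) = 0 := by
        rw [max_eq_right hx.le]; ring
      rw [hrhs]
      have h1 : Tendsto (fun N : ℕ => Real.sqrt N) atTop atTop :=
        sqrt_tendsto_atTop.comp tendsto_natCast_atTop_atTop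
      have hz : Tendsto (fun N : ℕ => -(Real.sqrt N * x / b)) atTop atTop := by
        have := h1.atTop_mul_const (show 0 < -x / b from div_pos (neg_pos.mpr hx) hb)
        exact this.congr fun N => by ring
      have hterm1 : Tendsto (fun N : ℕ => -x * stdGaussianCDF (-(Real.sqrt N * x / b)))
          atTop (nhds (-x)) := by
        have := (cdf_tendsto_one.comp hz).const_mul (-x)
        simpa using this
      have hcoef : Tendsto (fun N : ℕ => b / Real.sqrt (2 * π * N)) atTop (nhds 0) := by
        have hN : Tendsto (fun N : ℕ => 2 * π * (N:ℝ)) atTop atTop :=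
          tendsto_natCast_atTop_atTop.const_mul_atTop h2π
        have h2 : Tendsto (fun N : ℕ => (Real.sqrt (2 * π * N))⁻¹) atTop (nhds 0) :=
          tendsto_inv_atTop_zero.comp (sqrt_tendsto_atTop.comp hN)
        have := h2.const_mul b
        simpa [div_eq_mul_inv] using this
      have hterm2 : Tendsto (fun N : ℕ =>
          (b / Real.sqrt (2 * π * N)) * Real.exp (-((N : ℝ) * x ^ 2) / (2 * b ^ 2)))
          atTop (nhds 0) := by
        refine squeeze_zero (fun N => by positivity) (fun N => ?_) hcoef
        refine mul_le_of_le_one_right (by positivity) ?_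
        rw [Real.exp_le_one_iff]
        have : (0:ℝ) ≤ (N : ℝ) * x ^ 2 := by positivity
        have : (0:ℝ) < 2 * b ^ 2 := by positivity
        apply div_nonpos_of_nonpos_of_nonneg <;> linarith
      have hf := hterm1.add hterm2
      rw [add_zero] at hf
      have hlogf : Tendsto (fun N : ℕ => Real.log
          (-x * stdGaussianCDF (-(Real.sqrt N * x / b))
            + (b / Real.sqrt (2 * π * N)) * Real.exp (-((N : ℝ) * x ^ 2) / (2 * b ^ 2))))
          atTop (nhds (Real.log (-x))) :=
        ((Real.continuousAt_log (by linarith : -x ≠ 0)).tendsto).comp hf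
      have := tendsto_one_div_atTop_nhds_zero_nat.mul hlogf
      simpa using this
  · -- x = 0
    subst hx
    have h2π : (0:ℝ) < 2 * π := by positivity
    simp only [mul_zero, zero_div, neg_zero, zero_mul, ne_eq, OfNat.ofNat_ne_zero,
      not_false_eq_true, zero_pow, Real.exp_zero, mul_one, zero_add, max_self]
    have hU : Tendsto (fun N : ℕ => (Real.log b - Real.log (Real.sqrt (2 * π))) * (1 / (N:ℝ))
        - (1/2) * (Real.log N / N)) atTop (nhds 0) := by
      have := (tendsto_one_div_atTop_nhds_zero_nat.const_mul
        (Real.log b - Real.log (Real.sqrt (2 * π)))).sub (hlogN.const_mul (1/2))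
      simpa using this
    refine hU.congr' ?_
    filter_upwards [eventually_ge_atTop 1] with N hN
    have hN' : (0:ℝ) < N := by exact_mod_cast hN
    rw [show Real.sqrt (2 * π * N) = Real.sqrt (2 * π) * Real.sqrt N from Real.sqrt_mul h2π.le N,
      Real.log_div hb.ne' (by positivity),
      Real.log_mul (by positivity) (by positivity : Real.sqrt (N:ℝ) ≠ 0),
      Real.log_sqrt (Nat.cast_nonneg N)]
    ring
  · -- x > 0
      have h2π : (0:ℝ) < 2 * π := by positivity
      rw [max_eq_left hx.le]
      set c := Real.log b - Real.log (Real.sqrt (2 * π)) with hc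
      have hU : Tendsto (fun N : ℕ => c * (1 / (N:ℝ)) - (1/2) * (Real.log N / N)
          - x ^ 2 / (2 * b ^ 2)) atTop (nhds (-x ^ 2 / (2 * b ^ 2))) := by
        have := ((tendsto_one_div_atTop_nhds_zero_nat.const_mul c).sub
          (hlogN.const_mul (1/2))).sub_const (x ^ 2 / (2 * b ^ 2))
        rw [show c * 0 - 1/2 * 0 - x ^ 2 / (2 * b ^ 2) = -x ^ 2 / (2 * b ^ 2) by ring] at this
        exact this
      have hL : Tendsto (fun N : ℕ => (c * (1 / (N:ℝ)) - (1/2) * (Real.log N / N)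
          - x ^ 2 / (2 * b ^ 2)) - 2 * (1 / (N:ℝ)) - (2 * x / b) * (Real.sqrt N / N))
          atTop (nhds (-x ^ 2 / (2 * b ^ 2))) := by
        have := (hU.sub (tendsto_one_div_atTop_nhds_zero_nat.const_mul 2)).sub
          (hsqrtN.const_mul (2 * x / b))
        simpa using this
      refine tendsto_of_tendsto_of_tendsto_of_le_of_le' hL hU ?_ ?_ <;>
        · filter_upwards [eventually_ge_atTop 1] with N hN
          have hN' : (0:ℝ) < N := by exact_mod_cast hN
          have hs0 : 0 < Real.sqrt N := Real.sqrt_pos.mpr hN'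
          set s := Real.sqrt (N:ℝ) with hs_def
          have hss : s * s = (N:ℝ) := Real.mul_self_sqrt (Nat.cast_nonneg N)
          set t := s * x / b with ht_def
          have ht0 : 0 < t := by positivity
          have ht2 : t ^ 2 = (N:ℝ) * x ^ 2 / b ^ 2 := by
            rw [ht_def, div_pow, mul_pow, ← hss]; ring
          have hfeq : -x * stdGaussianCDF (-t)
                + (b / Real.sqrt (2 * π * N)) * Real.exp (-((N : ℝ) * x ^ 2) / (2 * b ^ 2))
              = (b / s) * (stdPdf t - t * stdGaussianCDF (-t)) := by
            have h1 : Real.sqrt (2 * π * N) = Real.sqrt (2 * π) * s := Real.sqrt_mul h2π.le N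
            have h2 : -((N : ℝ) * x ^ 2) / (2 * b ^ 2) = -t ^ 2 / 2 := by
              rw [ht2]; field_simp
            rw [h1, h2]
            unfold stdPdf
            have hsπ : (0:ℝ) < Real.sqrt (2 * π) := Real.sqrt_pos.mpr h2π
            rw [ht_def]
            field_simp
            ring
          have hGlb := le_G t ht0.le
          have hGub := G_le t ht0.le
          rw [← G_repr t] at hGlb hGub
          have hpos2 : 0 < stdPdf t - t * stdGaussianCDF (-t) :=
            lt_of_lt_of_le (stdPdf_pos _) hGlb
          have hbs : 0 < b / s := by positivity
          have e1 : Real.log (b / s) = Real.log b - Real.log (N:ℝ) / 2 := by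
            rw [Real.log_div hb.ne' hs0.ne', hs_def, Real.log_sqrt (Nat.cast_nonneg N)]
          first
          | -- lower bound goal
            calc (c * (1 / (N:ℝ)) - (1/2) * (Real.log N / N) - x ^ 2 / (2 * b ^ 2))
                  - 2 * (1 / (N:ℝ)) - (2 * x / b) * (s / N)
                = (1 / (N:ℝ)) * (Real.log (b / s) + Real.log (stdPdf (t + 2))) := by
                  rw [e1, log_stdPdf, hc, ht_def, show ((s * x / b) + 2) ^ 2
                    = (s * x / b) ^ 2 + 4 * (s * x / b) + 4 by ring, div_pow, mul_pow, ← hss]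
                  field_simp
                  ring
              _ ≤ (1 / (N:ℝ)) * Real.log (-x * stdGaussianCDF (-t)
                  + (b / Real.sqrt (2 * π * N)) * Real.exp (-((N : ℝ) * x ^ 2) / (2 * b ^ 2))) := by
                  refine mul_le_mul_of_nonneg_left ?_ (by positivity)
                  rw [hfeq, Real.log_mul hbs.ne' hpos2.ne']
                  have := Real.log_le_log (stdPdf_pos (t + 2)) hGlb
                  linarith
          | -- upper bound goal
            calc (1 / (N:ℝ)) * Real.log (-x * stdGaussianCDF (-t)
                  + (b / Real.sqrt (2 * π * N)) * Real.exp (-((N : ℝ) * x ^ 2) / (2 * b ^ 2)))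
                ≤ (1 / (N:ℝ)) * (Real.log (b / s) + Real.log (stdPdf t)) := by
                  refine mul_le_mul_of_nonneg_left ?_ (by positivity)
                  rw [hfeq, Real.log_mul hbs.ne' hpos2.ne']
                  have := Real.log_le_log hpos2 hGub
                  linarith
              _ = c * (1 / (N:ℝ)) - (1/2) * (Real.log N / N) - x ^ 2 / (2 * b ^ 2) := by
                  rw [e1, log_stdPdf, hc, ht2]
                  field_simp
                  ring
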